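/- Probability mass function of the noise-only balls-into-bins mechanism: let m, k, n be positive integers and p ∈ [0,1], and let M₀ be the random occupancy vector in ℕ^m produced by placing k balls independently and uniformly into m bins and, for each of n further independent trials, placing a ball into a uniformly random bin with probability p and no ball otherwise. Then for any vector W = (w₁,…,w_m) ∈ ℕ^m with total w = w₁ + ⋯ + w_m satisfying k ≤ w ≤ k + n, Pr[M₀ = W] = C(n, w−k) · p^{w−k} · (1−p)^{n−w+k} · (w! / ∏_{i=1}^m w_i!) · m^{−w}, where C(n, j) denotes the binomial coefficient. -/

import Mathlib

open scoped ENNReal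

noncomputable def uniformBin (m : ℕ) (hm : 0 < m) : PMF (Fin m) :=
  PMF.uniformOfFinset Finset.univ
    (Finset.univ_nonempty_iff.mpr (Fin.pos_iff_nonempty.mp hm))

/-- Sum of `n` independent copies of a random multiset. -/
noncomputable def repeatMS {α : Type*} (ν : PMF (Multiset α)) : ℕ → PMF (Multiset α)
  | 0 => PMF.pure 0
  | n + 1 => ν.bind fun s => (repeatMS ν n).map (s + ·)

/-- With probability `p`, one draw from `ν`; otherwise nothing. -/
noncomputable def trialM {α : Type*} (ν : PMF α) (p : ℝ≥0∞) (hp : p ≤ 1) : PMF (Multiset α) :=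
  (PMF.ofFintype (fun b : Bool => cond b p (1 - p))
    (by simpa using add_tsub_cancel_of_le hp)).bind fun b => if b then ν.map (fun x => {x}) else PMF.pure 0

/-- The noise-only balls-into-bins mechanism, as a random occupancy vector:
`k` balls thrown uniformly into `m` bins, plus `n` trials each throwing a
uniform ball with probability `p`. -/
noncomputable def M0 (m k n : ℕ) (hm : 0 < m) (p : ℝ≥0∞) (hp : p ≤ 1) : PMF (Fin m → ℕ) :=
  ((repeatMS ((uniformBin m hm).map (fun y => {y})) k).bind fun A =>
    (repeatMS (trialM (uniformBin m hm) p hp) n).map fun C => A + C).map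
      (fun o i => o.count i)

open scoped Classical

lemma map_add_apply {α : Type*} [DecidableEq α] (κ : PMF (Multiset α)) (t s : Multiset α) :
    (κ.map (t + ·)) s = if t ≤ s then κ (s - t) else 0 := by
  rw [PMF.map_apply]
  split_ifs with h
  · rw [tsum_eq_single (s - t)]
    · rw [if_pos]
      rw [add_comm, tsub_add_cancel_of_le h]
    · intro u hu
      rw [if_neg]
      intro hs
      exact hu (by rw [hs, add_tsub_cancel_left])
  · refine ENNReal.tsum_eq_zero |>.mpr fun u => ?_
    rw [if_neg]
    intro hs
    exact h (hs ▸ le_add_right le_rfl)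

lemma conv_apply {α : Type*} [DecidableEq α] (μ κ : PMF (Multiset α))
    (hμ : ∀ t : Multiset α, μ t ≠ 0 → t = 0 ∨ ∃ x, t = {x}) (s : Multiset α) :
    (μ.bind fun t => κ.map (t + ·)) s
      = μ 0 * κ s + ∑ x ∈ s.toFinset, μ {x} * κ (s.erase x) := by
  rw [PMF.bind_apply]
  have key : ∀ t : Multiset α, μ t * (κ.map (t + ·)) s
      = μ t * (if t ≤ s then κ (s - t) else 0) := fun t => by rw [map_add_apply]
  rw [tsum_congr key]
  rw [tsum_eq_sum (s := insert 0 (s.toFinset.image fun x => ({x} : Multiset α)))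
    (by
      intro t ht
      rcases eq_or_ne (μ t) 0 with h | h
      · rw [h, zero_mul]
      rcases hμ t h with rfl | ⟨x, rfl⟩
      · exact absurd (Finset.mem_insert_self _ _) ht
      rw [if_neg, mul_zero]
      intro hle
      exact ht (Finset.mem_insert_of_mem (Finset.mem_image_of_mem _
        (Multiset.mem_toFinset.mpr (Multiset.singleton_le.mp hle)))))]
  rw [Finset.sum_insert (by
    simp only [Finset.mem_image]
    rintro ⟨x, -, hx⟩
    exact Multiset.singleton_ne_zero x hx)]
  rw [if_pos (Multiset.zero_le s), tsub_zero]
  congr 1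
  rw [Finset.sum_image (fun x _ y _ h => Multiset.singleton_inj.mp h)]
  refine Finset.sum_congr rfl fun x hx => ?_
  rw [if_pos (Multiset.singleton_le.mpr (Multiset.mem_toFinset.mp hx)), Multiset.sub_singleton]

lemma uniformBin_apply (m : ℕ) (hm : 0 < m) (x : Fin m) :
    uniformBin m hm x = (m : ℝ≥0∞)⁻¹ := by
  simp [uniformBin, PMF.uniformOfFinset_apply]

lemma map_singleton_apply_singleton {α : Type*} (ν : PMF α) (x : α) :
    (ν.map fun x => ({x} : Multiset α)) {x} = ν x := by
  rw [PMF.map_apply, tsum_eq_single x]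
  · rw [if_pos rfl]
  · intro y hy
    exact if_neg fun hs => hy (Multiset.singleton_inj.mp hs).symm

lemma map_singleton_apply_ne {α : Type*} (ν : PMF α) (t : Multiset α)
    (h : ∀ x : α, t ≠ {x}) : (ν.map fun x => ({x} : Multiset α)) t = 0 := by
  rw [PMF.map_apply]
  exact ENNReal.tsum_eq_zero |>.mpr fun x => if_neg (h x)

lemma map_singleton_support {α : Type*} (ν : PMF α) (t : Multiset α)
    (h : (ν.map fun x => ({x} : Multiset α)) t ≠ 0) : t = 0 ∨ ∃ x, t = {x} := by
  by_contra hc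
  push_neg at hc
  exact h (map_singleton_apply_ne ν t hc.2)

lemma trialM_apply {α : Type*} (ν : PMF α) (p : ℝ≥0∞) (hp : p ≤ 1) (t : Multiset α) :
    trialM ν p hp t
      = (1 - p) * (if t = 0 then 1 else 0) + p * (ν.map fun x => ({x} : Multiset α)) t := by
  rw [trialM, PMF.bind_apply, tsum_bool]
  simp only [Bool.false_eq_true, if_false, if_true, PMF.ofFintype_apply, cond_false, cond_true,
    PMF.pure_apply]
  convert rfl

lemma trialM_zero {α : Type*} (ν : PMF α) (p : ℝ≥0∞) (hp : p ≤ 1) :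
    trialM ν p hp 0 = 1 - p := by
  rw [trialM_apply, if_pos rfl, mul_one,
    map_singleton_apply_ne ν 0 (fun x => (Multiset.singleton_ne_zero x).symm), mul_zero, add_zero]

lemma trialM_singleton {α : Type*} (ν : PMF α) (p : ℝ≥0∞) (hp : p ≤ 1) (x : α) :
    trialM ν p hp {x} = p * ν x := by
  rw [trialM_apply, if_neg (Multiset.singleton_ne_zero x), mul_zero, zero_add,
    map_singleton_apply_singleton]

lemma trialM_support {α : Type*} (ν : PMF α) (p : ℝ≥0∞) (hp : p ≤ 1) (t : Multiset α)
    (h : trialM ν p hp t ≠ 0) : t = 0 ∨ ∃ x, t = {x} := by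
  rw [trialM_apply] at h
  rcases eq_or_ne t 0 with rfl | ht
  · exact Or.inl rfl
  refine Or.inr ?_
  rw [if_neg ht, mul_zero, zero_add] at h
  exact (map_singleton_support ν t fun h0 => h (by rw [h0, mul_zero])).resolve_left ht

noncomputable def F (m : ℕ) (p q : ℝ≥0∞) (n k : ℕ) (s : Multiset (Fin m)) : ℝ≥0∞ :=
  if k ≤ Multiset.card s then
    (n.choose (Multiset.card s - k) : ℝ≥0∞) * p ^ (Multiset.card s - k)
      * q ^ (n - (Multiset.card s - k))
      * ((Multiset.card s).factorial : ℝ≥0∞)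
      * (∏ i : Fin m, ((s.count i).factorial : ℝ≥0∞))⁻¹
      * ((m : ℝ≥0∞))⁻¹ ^ Multiset.card s
  else 0

lemma prod_fact_ne_zero (m : ℕ) (s : Multiset (Fin m)) :
    (∏ i : Fin m, ((s.count i).factorial : ℝ≥0∞)) ≠ 0 := by
  refine Finset.prod_ne_zero_iff.mpr fun i _ => ?_
  exact_mod_cast (Nat.factorial_pos _).ne'

lemma prod_fact_ne_top (m : ℕ) (s : Multiset (Fin m)) :
    (∏ i : Fin m, ((s.count i).factorial : ℝ≥0∞)) ≠ ⊤ := by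
  rw [← Nat.cast_prod]
  exact ENNReal.natCast_ne_top _

lemma prod_fact_erase (m : ℕ) (s : Multiset (Fin m)) (x : Fin m) (hx : x ∈ s) :
    (∏ i : Fin m, (((s.erase x).count i).factorial : ℝ≥0∞))⁻¹
      = (s.count x : ℝ≥0∞) * (∏ i : Fin m, ((s.count i).factorial : ℝ≥0∞))⁻¹ := by
  have hc : 0 < s.count x := Multiset.count_pos.mpr hx
  have hnat : (∏ i : Fin m, ((s.erase x).count i).factorial) * s.count x
      = ∏ i : Fin m, (s.count i).factorial := by
    rw [← Finset.mul_prod_erase Finset.univ (fun i => ((s.erase x).count i).factorial)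
        (Finset.mem_univ x),
      ← Finset.mul_prod_erase Finset.univ (fun i => (s.count i).factorial) (Finset.mem_univ x)]
    have h1 : ∀ i ∈ Finset.univ.erase x,
        ((s.erase x).count i).factorial = (s.count i).factorial := by
      intro i hi
      rw [Multiset.count_erase_of_ne (Finset.mem_erase.mp hi).1]
    rw [Finset.prod_congr rfl h1, Multiset.count_erase_self]
    obtain ⟨c, hc'⟩ := Nat.exists_eq_succ_of_ne_zero hc.ne'
    rw [hc']
    simp only [Nat.succ_sub_one, Nat.factorial_succ, Nat.succ_eq_add_one]
    ring
  have hcast : (∏ i : Fin m, (((s.erase x).count i).factorial : ℝ≥0∞)) * (s.count x : ℝ≥0∞)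
      = ∏ i : Fin m, ((s.count i).factorial : ℝ≥0∞) := by
    exact_mod_cast congrArg (Nat.cast (R := ℝ≥0∞)) hnat
  have hcx0 : (s.count x : ℝ≥0∞) ≠ 0 := by exact_mod_cast hc.ne'
  have hcxt : (s.count x : ℝ≥0∞) ≠ ⊤ := ENNReal.natCast_ne_top _
  rw [← hcast, ENNReal.mul_inv (Or.inr hcxt) (Or.inr hcx0)]
  rw [mul_comm, mul_assoc, ENNReal.inv_mul_cancel hcx0 hcxt, mul_one]

-- count-weighted sum over toFinset
lemma sum_count_cast (m : ℕ) (s : Multiset (Fin m)) :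
    ∑ x ∈ s.toFinset, (s.count x : ℝ≥0∞) = (Multiset.card s : ℝ≥0∞) := by
  rw [← Nat.cast_sum]
  exact_mod_cast congrArg (Nat.cast (R := ℝ≥0∞)) (Multiset.toFinset_sum_count_eq s)

lemma repeat_trial_apply (m : ℕ) (hm : 0 < m) (p : ℝ≥0∞) (hp : p ≤ 1) (n : ℕ)
    (s : Multiset (Fin m)) :
    repeatMS (trialM (uniformBin m hm) p hp) n s = F m p (1 - p) n 0 s := by
  induction n generalizing s with
  | zero =>
    rw [show repeatMS (trialM (uniformBin m hm) p hp) 0 = PMF.pure 0 from rfl,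
      PMF.pure_apply, F]
    rcases eq_or_ne s 0 with rfl | hs
    · simp
    · rw [if_pos (Nat.zero_le _), if_neg hs,
        Nat.choose_eq_zero_of_lt (by simpa using Multiset.card_pos.mpr hs)]
      simp
  | succ n ih =>
    rw [show repeatMS (trialM (uniformBin m hm) p hp) (n+1)
        = (trialM (uniformBin m hm) p hp).bind
            (fun t => (repeatMS (trialM (uniformBin m hm) p hp) n).map (t + ·)) from rfl,
      conv_apply _ _ (trialM_support _ p hp), trialM_zero]
    simp only [ih, trialM_singleton, uniformBin_apply]
    set q := 1 - p with hq
    rcases eq_or_ne s 0 with rfl | hs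
    · simp [F]
      exact (pow_succ' q n).symm
    · obtain ⟨c', hc'⟩ := Nat.exists_eq_succ_of_ne_zero (Multiset.card_pos.mpr hs).ne'
      rw [Nat.succ_eq_add_one] at hc'
      have hterm : ∀ x ∈ s.toFinset,
          p * (m : ℝ≥0∞)⁻¹ * F m p q n 0 (s.erase x)
            = ((n.choose c' : ℝ≥0∞) * p ^ (c' + 1) * q ^ (n - c')
                * (c'.factorial : ℝ≥0∞)
                * (∏ i : Fin m, ((s.count i).factorial : ℝ≥0∞))⁻¹
                * ((m : ℝ≥0∞))⁻¹ ^ (c' + 1)) * (s.count x : ℝ≥0∞) := by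
        intro x hx
        have hxs := Multiset.mem_toFinset.mp hx
        have hce : Multiset.card (s.erase x) = c' :=
          by rw [Multiset.card_erase_of_mem hxs, hc']; rfl
        rw [F, if_pos (Nat.zero_le _), hce, Nat.sub_zero, prod_fact_erase m s x hxs,
          pow_succ, pow_succ]
        ring
      rw [Finset.sum_congr rfl hterm, ← Finset.mul_sum, sum_count_cast]
      rw [F, F, if_pos (Nat.zero_le _), if_pos (Nat.zero_le _), Nat.sub_zero]
      rw [hc']
      have hfact : ((c' + 1).factorial : ℝ≥0∞) = (c'.factorial : ℝ≥0∞) * ((c' : ℕ) + 1 : ℕ) := by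
        exact_mod_cast congrArg (Nat.cast (R := ℝ≥0∞)) (by rw [Nat.factorial_succ]; ring)
      have hpascal : ((n + 1).choose (c' + 1) : ℝ≥0∞)
          = (n.choose c' : ℝ≥0∞) + (n.choose (c' + 1) : ℝ≥0∞) := by
        exact_mod_cast congrArg (Nat.cast (R := ℝ≥0∞)) (Nat.choose_succ_succ' n c')
      have he1 : n + 1 - (c' + 1) = n - c' := by omega
      rcases le_or_gt (c' + 1) n with h | h
      · have he2 : n - (c' + 1) + 1 = n - c' := by omega
        rw [he1, hpascal, hfact, ← he2, pow_succ]
        push_cast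
        ring
      · have hz : (n.choose (c' + 1) : ℝ≥0∞) = 0 := by
          exact_mod_cast congrArg (Nat.cast (R := ℝ≥0∞)) (Nat.choose_eq_zero_of_lt h)
        rw [he1, hpascal, hz, hfact, add_zero]
        push_cast
        ring

lemma bind_succ {α : Type*} (ν κ : PMF (Multiset α)) (k : ℕ) :
    ((repeatMS ν (k+1)).bind fun A => κ.map (A + ·))
      = ν.bind fun t => (((repeatMS ν k).bind fun A => κ.map (A + ·)).map (t + ·)) := by
  rw [show repeatMS ν (k+1) = ν.bind fun s => (repeatMS ν k).map (s + ·) from rfl]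
  rw [PMF.bind_bind]
  refine congrArg _ (funext fun t => ?_)
  rw [PMF.bind_map, PMF.map_bind]
  refine congrArg _ (funext fun A => ?_)
  rw [PMF.map_comp]
  refine congrArg (fun f => PMF.map f κ) (funext fun C => ?_)
  simp [Function.comp, add_assoc]

lemma D_apply (m k n : ℕ) (hm : 0 < m) (p : ℝ≥0∞) (hp : p ≤ 1) (s : Multiset (Fin m)) :
    ((repeatMS ((uniformBin m hm).map (fun y => {y})) k).bind fun A =>
      (repeatMS (trialM (uniformBin m hm) p hp) n).map (A + ·)) s
      = F m p (1 - p) n k s := by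
  induction k generalizing s with
  | zero =>
    rw [show repeatMS ((uniformBin m hm).map (fun y => {y})) 0 = PMF.pure 0 from rfl,
      PMF.pure_bind]
    have : ((0 : Multiset (Fin m)) + ·) = id := funext fun t => zero_add t
    rw [this, PMF.map_id, repeat_trial_apply]
  | succ k ih =>
    rw [bind_succ, conv_apply _ _ (fun t => map_singleton_support _ t) s,
      map_singleton_apply_ne _ 0 (fun x => (Multiset.singleton_ne_zero x).symm), zero_mul,
      zero_add]
    simp only [ih, map_singleton_apply_singleton, uniformBin_apply]
    set q := 1 - p with hq
    rcases le_or_gt (k + 1) (Multiset.card s) with h | h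
    · have hs : s ≠ 0 := by
        intro h0
        rw [h0] at h
        simp at h
      have hc1 : 1 ≤ Multiset.card s := le_trans (Nat.le_add_left 1 k) h
      have hterm : ∀ x ∈ s.toFinset,
          (m : ℝ≥0∞)⁻¹ * F m p q n k (s.erase x)
            = ((n.choose (Multiset.card s - (k+1)) : ℝ≥0∞)
                * p ^ (Multiset.card s - (k+1)) * q ^ (n - (Multiset.card s - (k+1)))
                * ((Multiset.card s - 1).factorial : ℝ≥0∞)
                * (∏ i : Fin m, ((s.count i).factorial : ℝ≥0∞))⁻¹
                * ((m : ℝ≥0∞))⁻¹ ^ Multiset.card s) * (s.count x : ℝ≥0∞) := by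
        intro x hx
        have hxs := Multiset.mem_toFinset.mp hx
        have hce : Multiset.card (s.erase x) = Multiset.card s - 1 := by
          rw [Multiset.card_erase_of_mem hxs, Nat.pred_eq_sub_one]
        have he1 : Multiset.card s - 1 - k = Multiset.card s - (k + 1) := by omega
        have he2 : (m : ℝ≥0∞)⁻¹ * ((m : ℝ≥0∞)⁻¹) ^ (Multiset.card s - 1)
            = ((m : ℝ≥0∞))⁻¹ ^ Multiset.card s := by
          rw [← pow_succ']
          congr 1
          omega
        rw [F, if_pos (by omega), hce, he1, prod_fact_erase m s x hxs, ← he2]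
        ring
      rw [Finset.sum_congr rfl hterm, ← Finset.mul_sum, sum_count_cast]
      rw [F, if_pos h]
      have hfact : ((Multiset.card s).factorial : ℝ≥0∞)
          = ((Multiset.card s - 1).factorial : ℝ≥0∞) * (Multiset.card s : ℝ≥0∞) := by
        have : (Multiset.card s).factorial
            = (Multiset.card s - 1).factorial * Multiset.card s := by
          obtain ⟨c', hc'⟩ := Nat.exists_eq_succ_of_ne_zero (by omega : Multiset.card s ≠ 0)
          rw [hc']
          simp [Nat.factorial_succ, Nat.mul_comm]
        exact_mod_cast congrArg (Nat.cast (R := ℝ≥0∞)) this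
      rw [hfact]
      ring
    · have hterm : ∀ x ∈ s.toFinset, (m : ℝ≥0∞)⁻¹ * F m p q n k (s.erase x) = 0 := by
        intro x hx
        have hxs := Multiset.mem_toFinset.mp hx
        have hc1 : 1 ≤ Multiset.card s := by
          rw [Nat.one_le_iff_ne_zero]
          intro h0
          exact (Multiset.notMem_zero x) ((Multiset.card_eq_zero.mp h0) ▸ hxs)
        rw [F, if_neg (by rw [Multiset.card_erase_of_mem hxs, Nat.pred_eq_sub_one]; omega),
          mul_zero]
      rw [Finset.sum_congr rfl hterm, Finset.sum_const_zero, F, if_neg (by omega)]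

theorem stmt6 (m k n : ℕ) (hm : 0 < m) (hk : 0 < k) (hn : 0 < n)
    (p : ℝ) (hp0 : 0 ≤ p) (hp1 : p ≤ 1)
    (W : Fin m → ℕ) (w : ℕ) (hw : w = ∑ i, W i) (hkw : k ≤ w) (hwkn : w ≤ k + n) :
    ((M0 m k n hm (ENNReal.ofReal p) (ENNReal.ofReal_le_one.mpr hp1)) W).toReal =
      (n.choose (w - k) : ℝ) * p ^ (w - k) * (1 - p) ^ (n - (w - k)) *
        ((w.factorial : ℝ) / ∏ i, ((W i).factorial : ℝ)) / (m : ℝ) ^ w := by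
  classical
  set SW : Multiset (Fin m) := ∑ i : Fin m, Multiset.replicate (W i) i with hSW
  have hcount : ∀ j, SW.count j = W j := by
    intro j
    rw [hSW, Multiset.count_sum']
    simp [Multiset.count_replicate]
  have hcard : Multiset.card SW = w := by
    rw [hSW, hw]
    simp
  have huniq : ∀ s : Multiset (Fin m), W = (fun i => s.count i) → s = SW := by
    intro s hWs
    refine Multiset.ext.mpr fun j => ?_
    rw [hcount j, ← congrFun hWs j]
  have hM0 : (M0 m k n hm (ENNReal.ofReal p) (ENNReal.ofReal_le_one.mpr hp1)) W
      = F m (ENNReal.ofReal p) (1 - ENNReal.ofReal p) n k SW := by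
    rw [M0, PMF.map_apply, tsum_eq_single SW]
    · rw [if_pos (funext fun j => (hcount j).symm)]
      exact D_apply m k n hm _ _ SW
    · intro s hs
      rw [if_neg]
      intro hWs
      exact hs (huniq s hWs)
  have hprod : (∏ i : Fin m, ((SW.count i).factorial : ℝ≥0∞))
      = (∏ i : Fin m, ((W i).factorial : ℝ≥0∞)) :=
    Finset.prod_congr rfl fun i _ => by rw [hcount i]
  rw [hM0, F, hcard, hprod, if_pos hkw]
  have hq : (1 - ENNReal.ofReal p) = ENNReal.ofReal (1 - p) := by
    rw [ENNReal.ofReal_sub 1 hp0, ENNReal.ofReal_one]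
  rw [hq]
  have hprodR : (∏ i : Fin m, ((W i).factorial : ℝ≥0∞)).toReal
      = ∏ i : Fin m, ((W i).factorial : ℝ) := by
    rw [← Nat.cast_prod, ENNReal.toReal_natCast]
    push_cast
    rfl
  simp only [ENNReal.toReal_mul, ENNReal.toReal_pow, ENNReal.toReal_inv, hprodR,
    ENNReal.toReal_natCast, ENNReal.toReal_ofReal hp0,
    ENNReal.toReal_ofReal (show (0:ℝ) ≤ 1 - p by linarith)]
  field_simp
  rw [mul_assoc, ← mul_pow, one_div_mul_cancel (by exact_mod_cast hm.ne'), one_pow, mul_one]
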